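/- Let 𝒴 be a finite nonempty set and let P(y|ỹ) be a transition kernel on 𝒴 (i.e. P(·|ỹ) is a pmf on 𝒴 for each ỹ) with P(y|ỹ) > 0 for all y, ỹ ∈ 𝒴. Then there exists a unique pmf μ on 𝒴 that is stationary for P, i.e. satisfying μ(y) = Σ_{ỹ∈𝒴} μ(ỹ) P(y|ỹ) for every y ∈ 𝒴. -/

import Mathlib

open Finset
open scoped ENNReal NNReal

/-- **Existence and uniqueness of the stationary pmf** for a strictly positive
transition kernel on a finite nonempty set.  A pmf on a finite set `Obs` is a
nonnegative function summing to one; `P ytil y` denotes the transition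
probability `P(y | ytil)`. -/
theorem stmt_5 {Obs : Type*} [Fintype Obs] [Nonempty Obs]
    (P : Obs → Obs → ℝ)
    (hP_pos : ∀ ytil y, 0 < P ytil y)
    (hP_sum : ∀ ytil, ∑ y, P ytil y = 1) :
    ∃! μ : Obs → ℝ,
      (∀ y, 0 ≤ μ y) ∧ (∑ y, μ y = 1) ∧
      (∀ y, μ y = ∑ ytil, μ ytil * P ytil y) := by
  classical
  obtain ⟨x0⟩ := ‹Nonempty Obs›
  set n : ℕ := Fintype.card Obs with hn
  have hn_pos : 0 < n := Fintype.card_pos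
  set ε : ℝ := Finset.univ.inf' ⟨(x0, x0), mem_univ _⟩ (fun p : Obs × Obs => P p.1 p.2)
    with hεdef
  have hε_pos : 0 < ε := by
    rw [hεdef]
    exact (Finset.lt_inf'_iff _).2 fun p _ => hP_pos p.1 p.2
  have hε_le : ∀ x y, ε ≤ P x y := fun x y =>
    Finset.inf'_le (fun p : Obs × Obs => P p.1 p.2) (mem_univ (x, y))
  have hnε_le : (n : ℝ) * ε ≤ 1 := by
    have : ∑ _y : Obs, ε ≤ ∑ y, P x0 y := Finset.sum_le_sum fun y _ => hε_le x0 y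
    rwa [Finset.sum_const, card_univ, nsmul_eq_mul, hP_sum] at this
  have hnε_pos : 0 < (n : ℝ) * ε := mul_pos (by exact_mod_cast hn_pos) hε_pos
  -- the contraction constant
  set k : ℝ := 1 - (n : ℝ) * ε with hkdef
  have hk0 : 0 ≤ k := by simp [hkdef]; linarith
  have hk1 : k < 1 := by simp [hkdef]; linarith
  -- key contraction estimate
  have key : ∀ f : Obs → ℝ, (∑ y, f y = 0) →
      ∑ y, |∑ x, f x * P x y| ≤ k * ∑ y, |f y| := by
    intro f hf
    have h1 : ∀ y, |∑ x, f x * P x y| ≤ ∑ x, |f x| * (P x y - ε) := by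
      intro y
      have he : ∑ x, f x * P x y = ∑ x, f x * (P x y - ε) := by
        simp only [mul_sub, Finset.sum_sub_distrib, ← Finset.sum_mul, hf, zero_mul,
          sub_zero]
      rw [he]
      calc |∑ x, f x * (P x y - ε)| ≤ ∑ x, |f x * (P x y - ε)| :=
            Finset.abs_sum_le_sum_abs _ _
        _ = ∑ x, |f x| * (P x y - ε) := by
            refine Finset.sum_congr rfl fun x _ => ?_
            rw [abs_mul, abs_of_nonneg (sub_nonneg.2 (hε_le x y))]
    calc ∑ y, |∑ x, f x * P x y| ≤ ∑ y, ∑ x, |f x| * (P x y - ε) :=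
          Finset.sum_le_sum fun y _ => h1 y
      _ = ∑ x, |f x| * k := by
          rw [Finset.sum_comm]
          refine Finset.sum_congr rfl fun x _ => ?_
          rw [← Finset.mul_sum, Finset.sum_sub_distrib, hP_sum, Finset.sum_const,
            card_univ, nsmul_eq_mul, hkdef, hn]
      _ = k * ∑ y, |f y| := by rw [← Finset.sum_mul, mul_comm]
  -- uniqueness part (used twice)
  have uniq : ∀ μ ν : Obs → ℝ,
      (∀ y, μ y = ∑ x, μ x * P x y) → (∑ y, μ y = 1) →
      (∀ y, ν y = ∑ x, ν x * P x y) → (∑ y, ν y = 1) → μ = ν := by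
    intro μ ν hμ hμs hν hνs
    have hf : ∑ y, (μ y - ν y) = 0 := by
      rw [Finset.sum_sub_distrib, hμs, hνs, sub_self]
    have h := key (fun y => μ y - ν y) hf
    have heq : ∀ y, (∑ x, (μ x - ν x) * P x y) = μ y - ν y := by
      intro y
      simp only [sub_mul, Finset.sum_sub_distrib, ← hμ y, ← hν y]
    simp only [heq] at h
    have hsum0 : ∑ y, |μ y - ν y| = 0 := by
      nlinarith [Finset.sum_nonneg (fun y (_ : y ∈ Finset.univ) => abs_nonneg (μ y - ν y))]
    funext y
    have : |μ y - ν y| = 0 := by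
      have := (Finset.sum_eq_zero_iff_of_nonneg
        (fun y (_ : y ∈ Finset.univ) => abs_nonneg (μ y - ν y))).1 hsum0 y (mem_univ y)
      exact this
    have := abs_eq_zero.1 this
    linarith
  -- existence via Banach fixed point on the simplex in ℓ¹
  set E := PiLp 1 (fun _ : Obs => ℝ) with hE
  have hdistE : ∀ f g : E, dist f g = ∑ y, |f y - g y| := by
    intro f g
    rw [PiLp.dist_eq_sum (by simp : (0:ℝ) < (1:ℝ≥0∞).toReal)]
    simp [ENNReal.toReal_one, Real.rpow_one, Real.dist_eq]
  have hcoord : ∀ y : Obs, Continuous fun μ : E => μ y := fun y =>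
    (continuous_apply y).comp (PiLp.continuous_ofLp 1 _)
  set S : Set E := {μ | (∀ y, 0 ≤ μ y) ∧ ∑ y, μ y = 1} with hS
  have hSc : IsClosed S := by
    have h1 : IsClosed {μ : E | ∀ y, 0 ≤ μ y} := by
      have : {μ : E | ∀ y, 0 ≤ μ y} = ⋂ y, {μ : E | 0 ≤ μ y} := by
        ext μ; simp
      rw [this]
      exact isClosed_iInter fun y => isClosed_le continuous_const (hcoord y)
    have h2 : IsClosed {μ : E | ∑ y, μ y = 1} :=
      isClosed_eq (continuous_finset_sum _ fun y _ => hcoord y) continuous_const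
    exact h1.inter h2
  haveI : CompleteSpace S := hSc.completeSpace_coe
  haveI : Nonempty S := by
    refine ⟨⟨WithLp.toLp 1 (fun _ => (n : ℝ)⁻¹), fun y => by simp only [PiLp.toLp_apply]; positivity, ?_⟩⟩
    simp only [PiLp.toLp_apply]
    rw [Finset.sum_const, card_univ, nsmul_eq_mul]
    field_simp
    rfl
  set T : S → S := fun μ =>
    ⟨WithLp.toLp 1 (fun y => ∑ x, (μ : E) x * P x y),
      fun y => Finset.sum_nonneg fun x _ => mul_nonneg (μ.2.1 x) (hP_pos x y).le,
      by
        simp only [PiLp.toLp_apply]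
        rw [Finset.sum_comm]
        calc (∑ x, ∑ y, (μ : E) x * P x y) = ∑ x, (μ : E) x := by
              refine Finset.sum_congr rfl fun x _ => ?_
              rw [← Finset.mul_sum, hP_sum, mul_one]
          _ = 1 := μ.2.2⟩ with hT
  have hlip : LipschitzWith ⟨k, hk0⟩ T := by
    apply LipschitzWith.of_dist_le_mul
    intro μ ν
    rw [Subtype.dist_eq, Subtype.dist_eq, hdistE, hdistE]
    have hf : ∑ y, ((μ : E) y - (ν : E) y) = 0 := by
      rw [Finset.sum_sub_distrib, μ.2.2, ν.2.2, sub_self]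
    have h := key (fun y => (μ : E) y - (ν : E) y) hf
    calc ∑ y, |((T μ : E)) y - ((T ν : E)) y|
        = ∑ y, |∑ x, ((μ : E) x - (ν : E) x) * P x y| := by
          refine Finset.sum_congr rfl fun y _ => ?_
          congr 1
          simp only [hT, PiLp.toLp_apply, sub_mul, Finset.sum_sub_distrib]
      _ ≤ k * ∑ y, |(μ : E) y - (ν : E) y| := h
      _ = (⟨k, hk0⟩ : ℝ≥0) * ∑ y, |(μ : E) y - (ν : E) y| := rfl
  have hC : ContractingWith ⟨k, hk0⟩ T := ⟨by exact_mod_cast hk1, hlip⟩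
  set μ0 : S := hC.fixedPoint T with hμ0
  have hfix : T μ0 = μ0 := hC.fixedPoint_isFixedPt
  have hfix' : ∀ y, (μ0 : E) y = ∑ x, (μ0 : E) x * P x y := by
    intro y
    conv_lhs => rw [← hfix]
  refine ⟨(μ0 : E), ⟨μ0.2.1, μ0.2.2, hfix'⟩, ?_⟩
  rintro ν ⟨hν0, hνs, hνfix⟩
  exact uniq ν (μ0 : E) hνfix hνs hfix' μ0.2.2
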